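/- arXiv:1412.5761 — 3 statements merged into one kernel-verified Lean document; each statement's English description precedes it below -/
import Mathlib

section
/- Let X be a Banach space over ℝ that is a Grothendieck space and has the Dunford–Pettis property, and let Y be a separable Banach space over ℝ. Then every bounded linear operator T : X → Y is strictly singular. -/
open Filter Topology

section Defs

variable {E : Type*} [NormedAddCommGroup E] [NormedSpace ℝ E]
variable {F : Type*} [NormedAddCommGroup F] [NormedSpace ℝ F]

/-- A sequence converges weakly to `x₀`. -/
def WeakConvTo (x : ℕ → E) (x₀ : E) : Prop :=
  ∀ f : E →L[ℝ] ℝ, Tendsto (fun n => f (x n)) atTop (𝓝 (f x₀))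

/-- A sequence is weakly Cauchy. -/
def WeaklyCauchySeq (x : ℕ → E) : Prop :=
  ∀ f : E →L[ℝ] ℝ, ∃ L : ℝ, Tendsto (fun n => f (x n)) atTop (𝓝 L)

/-- Every bounded sequence has a weakly Cauchy subsequence. -/
def AlmostReflexive (E : Type*) [NormedAddCommGroup E] [NormedSpace ℝ E] : Prop :=
  ∀ x : ℕ → E, (∃ C : ℝ, ∀ n, ‖x n‖ ≤ C) →
    ∃ φ : ℕ → ℕ, StrictMono φ ∧ WeaklyCauchySeq (x ∘ φ)

/-- Every weakly convergent sequence converges in norm. -/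
def SchurProperty (E : Type*) [NormedAddCommGroup E] [NormedSpace ℝ E] : Prop :=
  ∀ (x : ℕ → E) (x₀ : E), WeakConvTo x x₀ → Tendsto x atTop (𝓝 x₀)

/-- Sequential reflexivity: every bounded sequence has a weakly convergent subsequence. -/
def SeqReflexive (E : Type*) [NormedAddCommGroup E] [NormedSpace ℝ E] : Prop :=
  ∀ x : ℕ → E, (∃ C : ℝ, ∀ n, ‖x n‖ ≤ C) →
    ∃ φ : ℕ → ℕ, StrictMono φ ∧ ∃ x₀ : E, WeakConvTo (x ∘ φ) x₀

/-- Every weakly Cauchy sequence converges weakly. -/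
def WeaklySeqComplete (E : Type*) [NormedAddCommGroup E] [NormedSpace ℝ E] : Prop :=
  ∀ x : ℕ → E, WeaklyCauchySeq x → ∃ x₀ : E, WeakConvTo x x₀

/-- No infinite-dimensional closed subspace is (sequentially) reflexive. -/
def VeryIrreflexive (E : Type*) [NormedAddCommGroup E] [NormedSpace ℝ E] : Prop :=
  ∀ X₀ : Subspace ℝ E, IsClosed (X₀ : Set E) → ¬FiniteDimensional ℝ X₀ →
    ¬SeqReflexive X₀

/-- A strictly singular bounded operator: on no infinite-dimensional closed subspace is it
an isomorphism onto its image. -/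
def StrictlySingular (T : E →L[ℝ] F) : Prop :=
  ∀ X₀ : Subspace ℝ E, IsClosed (X₀ : Set E) → ¬FiniteDimensional ℝ X₀ →
    ¬∃ c : ℝ, 0 < c ∧ ∀ x ∈ X₀, c * ‖x‖ ≤ ‖T x‖

/-- A weakly compact operator. -/
def WeaklyCompactOp (T : E →L[ℝ] F) : Prop :=
  ∀ x : ℕ → E, (∃ C : ℝ, ∀ n, ‖x n‖ ≤ C) →
    ∃ φ : ℕ → ℕ, StrictMono φ ∧ ∃ y : F, WeakConvTo (fun n => T (x (φ n))) y

/-- A completely continuous operator maps weakly convergent sequences to norm convergent ones. -/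
def CompletelyContinuousOp (T : E →L[ℝ] F) : Prop :=
  ∀ (x : ℕ → E) (x₀ : E), WeakConvTo x x₀ → ∃ y : F, Tendsto (fun n => T (x n)) atTop (𝓝 y)

/-- The image of the closed unit ball is relatively compact in norm. -/
def CompactOp (T : E →L[ℝ] F) : Prop :=
  IsCompact (closure (⇑T '' Metric.closedBall (0 : E) 1))

/-- The Dunford–Pettis property. -/
def DunfordPettisProp (E : Type*) [NormedAddCommGroup E] [NormedSpace ℝ E] : Prop :=
  ∀ (Z : Type*) [NormedAddCommGroup Z] [NormedSpace ℝ Z] [CompleteSpace Z],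
    ∀ T : E →L[ℝ] Z, WeaklyCompactOp T → CompletelyContinuousOp T

/-- The reciprocal Dunford–Pettis property. -/
def ReciprocalDunfordPettisProp (E : Type*) [NormedAddCommGroup E] [NormedSpace ℝ E] : Prop :=
  ∀ (Z : Type*) [NormedAddCommGroup Z] [NormedSpace ℝ Z] [CompleteSpace Z],
    ∀ T : E →L[ℝ] Z, CompletelyContinuousOp T → WeaklyCompactOp T

/-- The Dieudonné property. -/
def DieudonneProp (E : Type*) [NormedAddCommGroup E] [NormedSpace ℝ E] : Prop :=
  ∀ (Z : Type*) [NormedAddCommGroup Z] [NormedSpace ℝ Z] [CompleteSpace Z],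
    ∀ T : E →L[ℝ] Z,
      (∀ x : ℕ → E, WeaklyCauchySeq x → ∃ y : Z, WeakConvTo (fun n => T (x n)) y) →
      WeaklyCompactOp T

/-- A Grothendieck space: weak*-convergent sequences in the dual converge weakly. -/
def GrothendieckSpace (E : Type*) [NormedAddCommGroup E] [NormedSpace ℝ E] : Prop :=
  ∀ (f : ℕ → (E →L[ℝ] ℝ)) (g : E →L[ℝ] ℝ),
    (∀ x : E, Tendsto (fun n => f n x) atTop (𝓝 (g x))) →
    ∀ F : (E →L[ℝ] ℝ) →L[ℝ] ℝ, Tendsto (fun n => F (f n)) atTop (𝓝 (F g))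

/-- The Banach space ℓ¹ of absolutely summable real sequences. -/
abbrev EllOne : Type := lp (fun _ : ℕ => ℝ) 1

/-- Quasi-reflexive: the canonical image of `E` in its bidual has finite codimension. -/
def QuasiReflexive (E : Type*) [NormedAddCommGroup E] [NormedSpace ℝ E] : Prop :=
  FiniteDimensional ℝ
    ((StrongDual ℝ (StrongDual ℝ E)) ⧸
      LinearMap.range (NormedSpace.inclusionInDoubleDual ℝ E).toLinearMap)

/-- Hereditarily-ℓ¹: every infinite-dimensional closed subspace contains a closed subspace
topologically isomorphic to ℓ¹. -/
def HereditarilyEllOne (E : Type*) [NormedAddCommGroup E] [NormedSpace ℝ E] : Prop :=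
  ∀ X₀ : Subspace ℝ E, IsClosed (X₀ : Set E) → ¬FiniteDimensional ℝ X₀ →
    ∃ Z : Subspace ℝ E, Z ≤ X₀ ∧ IsClosed (Z : Set E) ∧ Nonempty (Z ≃L[ℝ] EllOne)

end Defs

section AuxUF
set_option maxHeartbeats 1000000
set_option synthInstance.maxHeartbeats 400000
set_option linter.unusedSectionVars false
open Metric

noncomputable def myU : Ultrafilter ℕ := Ultrafilter.of atTop

lemma myU_le : (myU : Filter ℕ) ≤ atTop := Ultrafilter.of_le _

variable {X : Type*} [NormedAddCommGroup X] [NormedSpace ℝ X]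

lemma exists_uf_functional (u : ℕ → X) (C : ℝ) (hu : ∀ n, ‖u n‖ ≤ C) :
    ∃ F : (X →L[ℝ] ℝ) →L[ℝ] ℝ,
      ∀ f : X →L[ℝ] ℝ, Tendsto (fun n => f (u n)) (myU : Filter ℕ) (𝓝 (F f)) := by
  have hC : (0:ℝ) ≤ C := (norm_nonneg _).trans (hu 0)
  have key : ∀ f : X →L[ℝ] ℝ, ∃ L : ℝ,
      Tendsto (fun n => f (u n)) (myU : Filter ℕ) (𝓝 L) := by
    intro f
    have hmem : ∀ n, f (u n) ∈ Set.Icc (-(‖f‖ * C)) (‖f‖ * C) := by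
      intro n
      have h1 : |f (u n)| ≤ ‖f‖ * C := by
        calc |f (u n)| = ‖f (u n)‖ := (Real.norm_eq_abs _).symm
          _ ≤ ‖f‖ * ‖u n‖ := f.le_opNorm _
          _ ≤ ‖f‖ * C := mul_le_mul_of_nonneg_left (hu n) (norm_nonneg f)
      exact abs_le.1 h1
    have hle : (Ultrafilter.map (fun n => f (u n)) myU : Filter ℝ) ≤
        𝓟 (Set.Icc (-(‖f‖ * C)) (‖f‖ * C)) := by
      rw [Filter.le_principal_iff, Ultrafilter.coe_map, Filter.mem_map]
      exact Filter.univ_mem' hmem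
    obtain ⟨L, -, hL⟩ :=
      isCompact_Icc.ultrafilter_le_nhds (Ultrafilter.map (fun n => f (u n)) myU) hle
    refine ⟨L, ?_⟩
    rwa [Ultrafilter.coe_map] at hL
  choose L hL using key
  have hadd : ∀ f g : X →L[ℝ] ℝ, L (f + g) = L f + L g := by
    intro f g
    refine tendsto_nhds_unique (hL (f + g)) ?_
    have := (hL f).add (hL g)
    simpa using this
  have hsmul : ∀ (c : ℝ) (f : X →L[ℝ] ℝ), L (c • f) = c * L f := by
    intro c f
    refine tendsto_nhds_unique (hL (c • f)) ?_
    have := (hL f).const_mul c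
    simpa using this
  let F₀ : (X →L[ℝ] ℝ) →ₗ[ℝ] ℝ :=
    { toFun := L, map_add' := hadd, map_smul' := hsmul }
  have hbd : ∀ f : X →L[ℝ] ℝ, ‖F₀ f‖ ≤ C * ‖f‖ := by
    intro f
    have habs : Tendsto (fun n => |f (u n)|) (myU : Filter ℕ) (𝓝 |L f|) := (hL f).abs
    have h2 : |L f| ≤ C * ‖f‖ := by
      refine le_of_tendsto habs (Filter.Eventually.of_forall fun n => ?_)
      calc |f (u n)| = ‖f (u n)‖ := (Real.norm_eq_abs _).symm
        _ ≤ ‖f‖ * ‖u n‖ := f.le_opNorm _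
        _ ≤ ‖f‖ * C := mul_le_mul_of_nonneg_left (hu n) (norm_nonneg f)
        _ = C * ‖f‖ := mul_comm _ _
    rw [Real.norm_eq_abs]; exact h2
  exact ⟨F₀.mkContinuous C hbd, fun f => hL f⟩


end AuxUF

section AuxNorming
open scoped ENNReal
set_option maxHeartbeats 1000000
set_option synthInstance.maxHeartbeats 400000
set_option linter.unusedSectionVars false

lemma exists_norming_family (Y : Type*) [NormedAddCommGroup Y] [NormedSpace ℝ Y]
    [TopologicalSpace.SeparableSpace Y] :
    ∃ g : ℕ → Y →L[ℝ] ℝ, (∀ k, ‖g k‖ ≤ 1) ∧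
      ∀ (y : Y) (ε : ℝ), 0 < ε → ∃ k, ‖y‖ - ε ≤ |g k y| := by
  have : Nonempty Y := ⟨0⟩
  set z : ℕ → Y := TopologicalSpace.denseSeq Y with hz
  have hdense : DenseRange z := TopologicalSpace.denseRange_denseSeq Y
  have key : ∀ k : ℕ, ∃ g : Y →L[ℝ] ℝ, ‖g‖ ≤ 1 ∧ (z k ≠ 0 → g (z k) = ‖z k‖) := by
    intro k
    by_cases h : z k = 0
    · exact ⟨0, by simp, fun h' => absurd h h'⟩
    · obtain ⟨g, hg1, hg2⟩ := exists_dual_vector ℝ (z k) (norm_ne_zero_iff.2 h)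
      exact ⟨g, le_of_eq hg1, fun _ => by exact_mod_cast hg2⟩
  choose g hg1 hg2 using key
  refine ⟨g, hg1, fun y ε hε => ?_⟩
  obtain ⟨k, hk⟩ := Metric.denseRange_iff.1 hdense y (ε / 2) (by linarith)
  refine ⟨k, ?_⟩
  have hyz : ‖y - z k‖ < ε / 2 := by rwa [← dist_eq_norm]
  by_cases h0 : z k = 0
  · have : ‖y‖ < ε / 2 := by
      have : y - z k = y := by rw [h0, sub_zero]
      rwa [this] at hyz
    have h9 : ‖y‖ - ε ≤ 0 := by linarith
    exact le_trans h9 (abs_nonneg _)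
  · have hgz : g k (z k) = ‖z k‖ := hg2 k h0
    have h1 : |g k (z k)| ≤ |g k y| + ‖y - z k‖ := by
      have heq : g k (z k) = g k y - g k (y - z k) := by rw [map_sub]; ring
      rw [heq]
      calc |g k y - g k (y - z k)| ≤ |g k y| + |g k (y - z k)| := abs_sub _ _
        _ ≤ |g k y| + ‖g k‖ * ‖y - z k‖ := by
            gcongr
            calc |g k (y - z k)| = ‖g k (y - z k)‖ := (Real.norm_eq_abs _).symm
              _ ≤ ‖g k‖ * ‖y - z k‖ := (g k).le_opNorm _
        _ ≤ |g k y| + 1 * ‖y - z k‖ := by gcongr; exact hg1 k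
        _ = |g k y| + ‖y - z k‖ := by ring
    have h2 : ‖y‖ - ‖y - z k‖ ≤ ‖z k‖ := by
      have := norm_sub_norm_le y (z k)
      linarith
    have h3 : |g k (z k)| = ‖z k‖ := by rw [hgz, abs_of_nonneg (norm_nonneg _)]
    rw [h3] at h1
    linarith

lemma norming_separates {Y : Type*} [NormedAddCommGroup Y] [NormedSpace ℝ Y]
    {g : ℕ → Y →L[ℝ] ℝ}
    (h2 : ∀ (y : Y) (ε : ℝ), 0 < ε → ∃ k, ‖y‖ - ε ≤ |g k y|)
    (y : Y) (hz : ∀ k, g k y = 0) : y = 0 := by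
  have hle : ∀ ε : ℝ, 0 < ε → ‖y‖ ≤ ε := by
    intro ε hε
    obtain ⟨k, hk⟩ := h2 y ε hε
    rw [hz k, abs_zero] at hk
    linarith
  have h0 : ‖y‖ ≤ 0 := by
    by_contra h
    push_neg at h
    have := hle (‖y‖ / 2) (by linarith)
    linarith
  exact norm_le_zero_iff.1 h0

lemma exists_linfty_embedding (Y : Type*) [NormedAddCommGroup Y] [NormedSpace ℝ Y]
    [TopologicalSpace.SeparableSpace Y] :
    ∃ q : Y →L[ℝ] (lp (fun _ : ℕ => ℝ) ∞), ∀ y : Y, ‖q y‖ = ‖y‖ := by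
  obtain ⟨gg, h1, h2⟩ := exists_norming_family Y
  have hcoordb : ∀ (y : Y) (k : ℕ), ‖gg k y‖ ≤ ‖y‖ := by
    intro y k
    calc ‖gg k y‖ ≤ ‖gg k‖ * ‖y‖ := (gg k).le_opNorm _
      _ ≤ 1 * ‖y‖ := mul_le_mul_of_nonneg_right (h1 k) (norm_nonneg _)
      _ = ‖y‖ := one_mul _
  have hmem : ∀ y : Y, Memℓp (fun k => gg k y) ∞ := by
    intro y
    apply memℓp_infty
    refine ⟨‖y‖, ?_⟩
    rintro - ⟨k, rfl⟩
    exact hcoordb y k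
  let Φ₀ : Y →ₗ[ℝ] lp (fun _ : ℕ => ℝ) ∞ :=
    { toFun := fun y => ⟨fun k => gg k y, hmem y⟩
      map_add' := by
        intro a b
        apply lp.ext
        rw [lp.coeFn_add]
        funext k
        exact map_add (gg k) a b
      map_smul' := by
        intro c a
        apply lp.ext
        rw [lp.coeFn_smul]
        funext k
        exact map_smul (gg k) c a }
  have happ : ∀ (y : Y) (k : ℕ), (Φ₀ y : ∀ _ : ℕ, ℝ) k = gg k y := fun y k => rfl
  have hub : ∀ y : Y, ‖Φ₀ y‖ ≤ ‖y‖ := by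
    intro y
    apply lp.norm_le_of_forall_le (norm_nonneg y)
    intro k
    rw [happ]
    exact hcoordb y k
  let q : Y →L[ℝ] lp (fun _ : ℕ => ℝ) ∞ :=
    Φ₀.mkContinuous 1 (fun y => by rw [one_mul]; exact hub y)
  refine ⟨q, fun y => le_antisymm (hub y) ?_⟩
  by_contra hlt
  push_neg at hlt
  set ε : ℝ := (‖y‖ - ‖q y‖) / 2 with hεdef
  have hε : 0 < ε := by
    have : ‖q y‖ = ‖Φ₀ y‖ := rfl
    rw [hεdef]
    have h4 : ‖Φ₀ y‖ < ‖y‖ := hlt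
    linarith [h4, this]
  obtain ⟨k, hk⟩ := h2 y ε hε
  have h5 : |gg k y| = ‖(q y : ∀ _ : ℕ, ℝ) k‖ := by
    rw [Real.norm_eq_abs]
    rfl
  have h6 : ‖(q y : ∀ _ : ℕ, ℝ) k‖ ≤ ‖q y‖ :=
    lp.norm_apply_le_norm ENNReal.top_ne_zero (q y) k
  rw [h5] at hk
  have h7 : ‖q y‖ = ‖Φ₀ y‖ := rfl
  rw [hεdef] at hk
  have h8 : ‖Φ₀ y‖ < ‖y‖ := hlt
  rw [h7] at hk h6
  linarith

end AuxNorming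

section AuxKS
set_option linter.unusedSectionVars false
open Metric

set_option maxHeartbeats 1000000
set_option synthInstance.maxHeartbeats 400000

variable {Y : Type*} [NormedAddCommGroup Y] [NormedSpace ℝ Y] [CompleteSpace Y]

lemma weakstar_seq_cont_is_eval [TopologicalSpace.SeparableSpace Y]
    (Λ : (Y →L[ℝ] ℝ) →L[ℝ] ℝ)
    (hseq : ∀ (g : ℕ → Y →L[ℝ] ℝ) (g₀ : Y →L[ℝ] ℝ),
      (∀ y : Y, Tendsto (fun m => g m y) atTop (𝓝 (g₀ y))) →
      Tendsto (fun m => Λ (g m)) atTop (𝓝 (Λ g₀))) :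
    ∃ y : Y, ∀ g : Y →L[ℝ] ℝ, Λ g = g y := by
  have : Nonempty Y := ⟨0⟩
  set z : ℕ → Y := TopologicalSpace.denseSeq Y with hzdef
  have hdense : DenseRange z := TopologicalSpace.denseRange_denseSeq Y
  -- Step 1: epsilon-delta continuity at 0 on the unit ball w.r.t. finitely many z's
  have KS1 : ∀ ε : ℝ, 0 < ε → ∃ m : ℕ, ∀ g : Y →L[ℝ] ℝ, ‖g‖ ≤ 1 →
      (∀ k < m + 1, |g (z k)| ≤ 1 / (m + 1 : ℝ)) → |Λ g| ≤ ε := by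
    intro ε hε
    by_contra hcon
    push_neg at hcon
    choose gs hgs1 hgs2 hgs3 using hcon
    have hwstar : ∀ y : Y, Tendsto (fun m => gs m y) atTop (𝓝 ((0 : Y →L[ℝ] ℝ) y)) := by
      intro y
      simp only [ContinuousLinearMap.zero_apply]
      rw [Metric.tendsto_atTop]
      intro ε' hε'
      obtain ⟨k, hk⟩ := Metric.denseRange_iff.1 hdense y (ε' / 2) (by linarith)
      obtain ⟨M, hM⟩ := exists_nat_one_div_lt (show (0:ℝ) < ε' / 2 by linarith)
      refine ⟨max k M, fun m hm => ?_⟩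
      have hkm : k < m + 1 := Nat.lt_succ_of_le (le_trans (le_max_left _ _) hm)
      have hMm : (1 : ℝ) / (m + 1) ≤ 1 / (M + 1) := by
        apply one_div_le_one_div_of_le
        · positivity
        · have : (M : ℝ) ≤ m := Nat.cast_le.2 (le_trans (le_max_right _ _) hm)
          linarith
      have h1 : |gs m y| ≤ |gs m (z k)| + ‖y - z k‖ := by
        have heq : gs m y = gs m (z k) + gs m (y - z k) := by rw [map_sub]; ring
        rw [heq]
        calc |gs m (z k) + gs m (y - z k)| ≤ |gs m (z k)| + |gs m (y - z k)| := abs_add_le _ _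
          _ ≤ |gs m (z k)| + ‖gs m‖ * ‖y - z k‖ := by
              gcongr
              calc |gs m (y - z k)| = ‖gs m (y - z k)‖ := (Real.norm_eq_abs _).symm
                _ ≤ ‖gs m‖ * ‖y - z k‖ := (gs m).le_opNorm _
          _ ≤ |gs m (z k)| + 1 * ‖y - z k‖ := by gcongr; exact hgs1 m
          _ = |gs m (z k)| + ‖y - z k‖ := by ring
      have h2 : ‖y - z k‖ < ε' / 2 := by rwa [← dist_eq_norm]
      have h3 : |gs m (z k)| ≤ 1 / (m + 1 : ℝ) := hgs2 m k hkm
      rw [Real.dist_eq, sub_zero]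
      calc |gs m y| ≤ |gs m (z k)| + ‖y - z k‖ := h1
        _ < 1 / (m + 1 : ℝ) + ε' / 2 := add_lt_add_of_le_of_lt h3 h2
        _ ≤ 1 / (M + 1 : ℝ) + ε' / 2 := by linarith
        _ < ε' / 2 + ε' / 2 := by linarith
        _ = ε' := by ring
    have hΛ0 : Tendsto (fun m => Λ (gs m)) atTop (𝓝 (Λ 0)) := hseq gs 0 hwstar
    rw [map_zero] at hΛ0
    have hev : ∀ᶠ m in atTop, |Λ (gs m)| < ε := by
      have h := hΛ0.abs
      rw [abs_zero] at h
      exact h.eventually_lt_const hε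
    obtain ⟨m, hm⟩ := hev.exists
    exact absurd (hgs3 m) (not_lt.2 (le_of_lt hm))
  -- Step 2: approximate Λ by evaluations
  have KS2 : ∀ ε : ℝ, 0 < ε → ∃ y : Y, ‖Λ - NormedSpace.inclusionInDoubleDual ℝ Y y‖ ≤ ε := by
    intro ε hε
    obtain ⟨m, hm⟩ := KS1 ε hε
    have hmpos : (0:ℝ) < m + 1 := by positivity
    set Mg : (Y →L[ℝ] ℝ) → ℝ := fun g => (Finset.range (m + 1)).sup' ⟨0, by simp⟩
      (fun k => |g (z k)|) with hMgdef
    have hMg_nonneg : ∀ g, 0 ≤ Mg g := by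
      intro g
      have h0 : (0:ℕ) ∈ Finset.range (m+1) := by simp
      calc (0:ℝ) ≤ |g (z 0)| := abs_nonneg _
        _ ≤ Mg g := Finset.le_sup' (fun k => |g (z k)|) h0
    have hMg_le : ∀ g, ∀ k, k < m + 1 → |g (z k)| ≤ Mg g :=
      fun g k hk => Finset.le_sup' (fun k => |g (z k)|) (Finset.mem_range.2 hk)
    -- homogeneous inequality
    have key2 : ∀ g : Y →L[ℝ] ℝ, |Λ g| ≤ ε * ‖g‖ + ε * (m + 1) * Mg g := by
      intro g
      rcases eq_or_ne g 0 with rfl | hg0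
      · simp only [map_zero, abs_zero, norm_zero, mul_zero, zero_add]
        have := hMg_nonneg (0 : Y →L[ℝ] ℝ)
        positivity
      have hgn : 0 < ‖g‖ := norm_pos_iff.2 hg0
      set r : ℝ := max ‖g‖ ((m + 1) * Mg g) with hrdef
      have hr : 0 < r := lt_of_lt_of_le hgn (le_max_left _ _)
      set h : Y →L[ℝ] ℝ := r⁻¹ • g with hhdef
      have hh1 : ‖h‖ ≤ 1 := by
        apply ContinuousLinearMap.opNorm_le_bound _ zero_le_one
        intro ξ
        have happ : h ξ = r⁻¹ * g ξ := rfl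
        rw [happ, one_mul, Real.norm_eq_abs, abs_mul, abs_of_pos (inv_pos.2 hr)]
        have h1 : |g ξ| ≤ ‖g‖ * ‖ξ‖ := by
          rw [← Real.norm_eq_abs]; exact g.le_opNorm ξ
        have h2 : ‖g‖ ≤ r := le_max_left _ _
        calc r⁻¹ * |g ξ| ≤ r⁻¹ * (‖g‖ * ‖ξ‖) := mul_le_mul_of_nonneg_left h1 (inv_pos.2 hr).le
          _ ≤ r⁻¹ * (r * ‖ξ‖) := by
              apply mul_le_mul_of_nonneg_left _ (inv_pos.2 hr).le
              exact mul_le_mul_of_nonneg_right h2 (norm_nonneg ξ)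
          _ = ‖ξ‖ := by field_simp
      have hh2 : ∀ k, k < m + 1 → |h (z k)| ≤ 1 / (m + 1 : ℝ) := by
        intro k hk
        have happ : h (z k) = r⁻¹ * g (z k) := rfl
        rw [happ, abs_mul, abs_of_pos (inv_pos.2 hr), inv_mul_le_iff₀ hr]
        have h1 : (m + 1 : ℝ) * Mg g ≤ r := le_max_right _ _
        have h2 : |g (z k)| ≤ Mg g := hMg_le g k hk
        rw [mul_one_div, le_div_iff₀ hmpos]
        calc |g (z k)| * (m + 1 : ℝ) ≤ Mg g * (m + 1 : ℝ) :=
              mul_le_mul_of_nonneg_right h2 (le_of_lt hmpos)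
          _ = (m + 1 : ℝ) * Mg g := mul_comm _ _
          _ ≤ r := h1
      have hΛh : |Λ h| ≤ ε := hm h hh1 hh2
      have hΛhr : Λ h = r⁻¹ * Λ g := by rw [hhdef, map_smul]; rfl
      rw [hΛhr, abs_mul, abs_of_pos (inv_pos.2 hr), inv_mul_le_iff₀ hr] at hΛh
      calc |Λ g| ≤ r * ε := hΛh
        _ ≤ (‖g‖ + (m + 1) * Mg g) * ε := by
            apply mul_le_mul_of_nonneg_right _ (le_of_lt hε)
            exact max_le_add_of_nonneg (norm_nonneg g)
              (mul_nonneg (le_of_lt hmpos) (hMg_nonneg g))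
        _ = ε * ‖g‖ + ε * (m + 1) * Mg g := by ring
    -- restrict to the intersection of kernels, extend by Hahn–Banach
    set Lk : Fin (m + 1) → (Y →L[ℝ] ℝ) →ₗ[ℝ] ℝ :=
      fun k => ((NormedSpace.inclusionInDoubleDual ℝ Y (z k)) : (Y →L[ℝ] ℝ) →L[ℝ] ℝ).toLinearMap
      with hLkdef
    set N : Subspace ℝ (Y →L[ℝ] ℝ) := ⨅ k : Fin (m + 1), LinearMap.ker (Lk k) with hNdef
    have hmemN : ∀ g : Y →L[ℝ] ℝ, g ∈ N ↔ ∀ k : Fin (m + 1), g (z k) = 0 := by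
      intro g
      rw [hNdef, Submodule.mem_iInf]
      refine forall_congr' fun k => ?_
      rw [LinearMap.mem_ker]
      exact Iff.rfl
    have hres : ∀ x : N, |Λ (x : Y →L[ℝ] ℝ)| ≤ ε * ‖x‖ := by
      intro x
      have hMg0 : Mg (x : Y →L[ℝ] ℝ) = 0 := by
        apply le_antisymm
        · apply Finset.sup'_le
          intro k hk
          have hk' : k < m + 1 := Finset.mem_range.1 hk
          have := (hmemN (x : Y →L[ℝ] ℝ)).1 x.2 ⟨k, hk'⟩
          simp [this]
        · exact hMg_nonneg _
      have := key2 (x : Y →L[ℝ] ℝ)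
      rw [hMg0, mul_zero, add_zero] at this
      exact this
    set Λr : N →L[ℝ] ℝ := Λ.comp N.subtypeL with hΛrdef
    letI : Norm (N →L[ℝ] ℝ) := @ContinuousLinearMap.hasOpNorm ℝ ℝ N ℝ _ _ _ _ _ _ (RingHom.id ℝ)
    have hΛrnorm : ‖Λr‖ ≤ ε := by
      apply ContinuousLinearMap.opNorm_le_bound _ (le_of_lt hε)
      intro x
      have := hres x
      rw [Real.norm_eq_abs]; exact this
    obtain ⟨Λt, hΛt, hΛtnorm⟩ := exists_extension_norm_eq N Λr
    set D : (Y →L[ℝ] ℝ) →L[ℝ] ℝ := Λ - Λt with hDdef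
    have hDN : ∀ g : Y →L[ℝ] ℝ, (∀ k : Fin (m+1), g (z k) = 0) → D g = 0 := by
      intro g hg
      have hgN : g ∈ N := (hmemN g).2 hg
      have := hΛt ⟨g, hgN⟩
      simp only [hDdef, ContinuousLinearMap.sub_apply]
      rw [this]
      simp [hΛrdef]
    have hker : (⨅ k : Fin (m+1), LinearMap.ker (Lk k)) ≤ LinearMap.ker (D.toLinearMap) := by
      intro g hg
      rw [LinearMap.mem_ker]
      apply hDN
      intro k
      exact (hmemN g).1 hg k
    have hspan := mem_span_of_iInf_ker_le_ker hker
    obtain ⟨cc, hcc⟩ := (Submodule.mem_span_range_iff_exists_fun ℝ).1 hspan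
    set y₀ : Y := ∑ k : Fin (m+1), cc k • z k with hy₀def
    have hDy₀ : ∀ g : Y →L[ℝ] ℝ, D g = g y₀ := by
      intro g
      have h1 : D g = (∑ k : Fin (m+1), cc k • Lk k) g := by rw [hcc]; rfl
      rw [h1]
      rw [LinearMap.sum_apply]
      rw [hy₀def, map_sum]
      congr 1
      funext k
      rw [LinearMap.smul_apply, map_smul]
      rfl
    refine ⟨y₀, ?_⟩
    have heq : Λ - NormedSpace.inclusionInDoubleDual ℝ Y y₀ = Λt := by
      ext g
      have h1 : NormedSpace.inclusionInDoubleDual ℝ Y y₀ g = g y₀ := NormedSpace.dual_def ℝ Y y₀ g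
      have h2 : D g = g y₀ := hDy₀ g
      simp only [ContinuousLinearMap.sub_apply, h1]
      rw [← h2]
      simp [hDdef]
    rw [heq, hΛtnorm]
    exact hΛrnorm
  -- Step 3: pass to the limit
  have hJnorm : ∀ w : Y, ‖NormedSpace.inclusionInDoubleDual ℝ Y w‖ = ‖w‖ := fun w =>
    (NormedSpace.inclusionInDoubleDualLi ℝ (E := Y)).norm_map w
  have key3 : ∀ j : ℕ, ∃ y : Y,
      ‖Λ - NormedSpace.inclusionInDoubleDual ℝ Y y‖ ≤ 1 / (j + 1 : ℝ) := by
    intro j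
    exact KS2 (1 / (j + 1 : ℝ)) (by positivity)
  choose ys hys using key3
  have hcauchy : CauchySeq ys := by
    rw [Metric.cauchySeq_iff']
    intro ε hε
    obtain ⟨N, hN⟩ := exists_nat_one_div_lt (show (0:ℝ) < ε / 2 by linarith)
    refine ⟨N, fun n hn => ?_⟩
    have h1 : (1:ℝ) / (n + 1) ≤ 1 / (N + 1) := by
      apply one_div_le_one_div_of_le
      · positivity
      · have : (N : ℝ) ≤ n := Nat.cast_le.2 hn
        linarith
    have h2 : dist (ys n) (ys N) = ‖NormedSpace.inclusionInDoubleDual ℝ Y (ys n) -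
        NormedSpace.inclusionInDoubleDual ℝ Y (ys N)‖ := by
      rw [dist_eq_norm, ← map_sub, hJnorm]
    calc dist (ys n) (ys N) = ‖NormedSpace.inclusionInDoubleDual ℝ Y (ys n) -
          NormedSpace.inclusionInDoubleDual ℝ Y (ys N)‖ := h2
      _ ≤ ‖NormedSpace.inclusionInDoubleDual ℝ Y (ys n) - Λ‖ +
          ‖Λ - NormedSpace.inclusionInDoubleDual ℝ Y (ys N)‖ := by
            have := norm_sub_le_norm_sub_add_norm_sub
              (NormedSpace.inclusionInDoubleDual ℝ Y (ys n)) Λ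
              (NormedSpace.inclusionInDoubleDual ℝ Y (ys N))
            exact this
      _ ≤ 1 / (n + 1 : ℝ) + 1 / (N + 1 : ℝ) := by
            have hflip : ‖NormedSpace.inclusionInDoubleDual ℝ Y (ys n) - Λ‖ =
                ‖Λ - NormedSpace.inclusionInDoubleDual ℝ Y (ys n)‖ := norm_sub_rev (E := StrongDual ℝ (StrongDual ℝ Y)) _ _
            exact add_le_add (le_trans (le_of_eq hflip) (hys n)) (hys N)
      _ ≤ 1 / (N + 1 : ℝ) + 1 / (N + 1 : ℝ) := by linarith
      _ < ε / 2 + ε / 2 := by linarith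
      _ = ε := by ring
  obtain ⟨yy, hyy⟩ := cauchySeq_tendsto_of_complete hcauchy
  refine ⟨yy, fun g => ?_⟩
  have h1 : Tendsto (fun j => g (ys j)) atTop (𝓝 (g yy)) :=
    (g.continuous.tendsto yy).comp hyy
  have h2 : Tendsto (fun j => g (ys j)) atTop (𝓝 (Λ g)) := by
    rw [tendsto_iff_dist_tendsto_zero]
    have hb : ∀ j : ℕ, dist (g (ys j)) (Λ g) ≤ ‖g‖ * (1 / (j + 1 : ℝ)) := by
      intro j
      have h3 : g (ys j) - Λ g =
          -((Λ - NormedSpace.inclusionInDoubleDual ℝ Y (ys j)) g) := by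
        simp [ContinuousLinearMap.sub_apply, NormedSpace.dual_def]
      rw [Real.dist_eq, h3, abs_neg, ← Real.norm_eq_abs]
      calc ‖(Λ - NormedSpace.inclusionInDoubleDual ℝ Y (ys j)) g‖ ≤
            ‖Λ - NormedSpace.inclusionInDoubleDual ℝ Y (ys j)‖ * ‖g‖ :=
          ContinuousLinearMap.le_opNorm _ _
        _ ≤ (1 / (j + 1 : ℝ)) * ‖g‖ :=
            mul_le_mul_of_nonneg_right (hys j) (norm_nonneg _)
        _ = ‖g‖ * (1 / (j + 1 : ℝ)) := mul_comm _ _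
    have hb0 : Tendsto (fun j : ℕ => ‖g‖ * (1 / (j + 1 : ℝ))) atTop (𝓝 0) := by
      have := tendsto_one_div_add_atTop_nhds_zero_nat.const_mul ‖g‖
      simpa using this
    exact squeeze_zero (fun j => dist_nonneg) hb hb0
  exact tendsto_nhds_unique h2 h1

end AuxKS
open Filter Topology Metric

section WC
set_option maxHeartbeats 1000000
set_option synthInstance.maxHeartbeats 400000

variable {X : Type*} [NormedAddCommGroup X] [NormedSpace ℝ X] [CompleteSpace X]
variable {Y : Type*} [NormedAddCommGroup Y] [NormedSpace ℝ Y] [CompleteSpace Y]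

lemma exists_uf_weak_limit [TopologicalSpace.SeparableSpace Y]
    (hX : GrothendieckSpace X) (T : X →L[ℝ] Y)
    (u : ℕ → X) (C : ℝ) (hu : ∀ n, ‖u n‖ ≤ C) :
    ∃ y : Y, ∀ g : Y →L[ℝ] ℝ,
      Tendsto (fun n => g (T (u n))) (myU : Filter ℕ) (𝓝 (g y)) := by
  obtain ⟨F, hF⟩ := exists_uf_functional u C hu
  set Λ : (Y →L[ℝ] ℝ) →L[ℝ] ℝ := F.comp ((ContinuousLinearMap.compL ℝ X Y ℝ).flip T)
    with hΛdef
  have hΛ : ∀ g : Y →L[ℝ] ℝ, Λ g = F (g.comp T) := fun g => rfl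
  have hseq : ∀ (g : ℕ → Y →L[ℝ] ℝ) (g₀ : Y →L[ℝ] ℝ),
      (∀ y : Y, Tendsto (fun m => g m y) atTop (𝓝 (g₀ y))) →
      Tendsto (fun m => Λ (g m)) atTop (𝓝 (Λ g₀)) := by
    intro g g₀ hptw
    have h1 : ∀ xx : X, Tendsto (fun m => ((g m).comp T) xx) atTop (𝓝 ((g₀.comp T) xx)) :=
      fun xx => hptw (T xx)
    have h2 := hX (fun m => (g m).comp T) (g₀.comp T) h1 F
    simpa [hΛ] using h2
  obtain ⟨y, hy⟩ := weakstar_seq_cont_is_eval Λ hseq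
  refine ⟨y, fun g => ?_⟩
  have h3 := hF (g.comp T)
  rw [← hΛ, hy] at h3
  exact h3

lemma grothendieck_weaklyCompact [TopologicalSpace.SeparableSpace Y]
    (hX : GrothendieckSpace X) (T : X →L[ℝ] Y) : WeaklyCompactOp T := by
  rintro x ⟨C, hC⟩
  obtain ⟨gg, hgg1, hgg2⟩ := exists_norming_family Y
  have hC0 : (0:ℝ) ≤ C := (norm_nonneg _).trans (hC 0)
  set B : ℝ := ‖T‖ * C with hBdef
  set a : ℕ → ℕ → ℝ := fun n k => gg k (T (x n)) with hadef
  have hmem : ∀ n, a n ∈ Set.pi Set.univ (fun _ : ℕ => Set.Icc (-B) B) := by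
    intro n k _
    have h1 : |gg k (T (x n))| ≤ B := by
      calc |gg k (T (x n))| = ‖gg k (T (x n))‖ := (Real.norm_eq_abs _).symm
        _ ≤ ‖gg k‖ * ‖T (x n)‖ := (gg k).le_opNorm _
        _ ≤ 1 * ‖T (x n)‖ := mul_le_mul_of_nonneg_right (hgg1 k) (norm_nonneg _)
        _ = ‖T (x n)‖ := one_mul _
        _ ≤ ‖T‖ * ‖x n‖ := T.le_opNorm _
        _ ≤ ‖T‖ * C := mul_le_mul_of_nonneg_left (hC n) (norm_nonneg T)
    exact abs_le.1 h1
  have hcpt : IsCompact (Set.pi Set.univ (fun _ : ℕ => Set.Icc (-B) B)) :=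
    isCompact_univ_pi fun _ => isCompact_Icc
  obtain ⟨b, -, φ, hφ, hconv⟩ := hcpt.tendsto_subseq hmem
  have hcoord : ∀ k, Tendsto (fun n => gg k (T (x (φ n)))) atTop (𝓝 (b k)) := by
    intro k
    have := (tendsto_pi_nhds.1 hconv) k
    exact this
  obtain ⟨y, hy⟩ := exists_uf_weak_limit hX T (x ∘ φ) C (fun n => hC _)
  have hbk : ∀ k, b k = gg k y := by
    intro k
    exact tendsto_nhds_unique ((hcoord k).mono_left myU_le) (hy (gg k))
  refine ⟨φ, hφ, y, ?_⟩
  intro g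
  by_contra hcontra
  rw [Metric.tendsto_atTop] at hcontra
  push_neg at hcontra
  obtain ⟨ε, hε, hfreq⟩ := hcontra
  have hfreq' : ∃ᶠ n in atTop, ε ≤ dist (g (T (x (φ n)))) (g y) := by
    rw [Filter.frequently_atTop]
    intro N
    obtain ⟨n, hn1, hn2⟩ := hfreq N
    exact ⟨n, hn1, hn2⟩
  obtain ⟨ψ, hψ, hψ2⟩ := Filter.extraction_of_frequently_atTop hfreq'
  obtain ⟨y₂, hy₂⟩ := exists_uf_weak_limit hX T (x ∘ φ ∘ ψ) C (fun n => hC _)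
  have hy₂y : y₂ = y := by
    have heq : ∀ k, gg k y₂ = gg k y := by
      intro k
      have h1 : Tendsto (fun n => gg k (T (x (φ (ψ n))))) atTop (𝓝 (b k)) :=
        (hcoord k).comp hψ.tendsto_atTop
      have h2 := hy₂ (gg k)
      have h3 := tendsto_nhds_unique (h1.mono_left myU_le) h2
      rw [← h3, hbk k]
    have hz : ∀ k, gg k (y₂ - y) = 0 := by
      intro k
      rw [map_sub, heq k, sub_self]
    have := norming_separates hgg2 _ hz
    exact sub_eq_zero.1 this
  have h4 : Tendsto (fun n => dist (g (T (x (φ (ψ n))))) (g y)) (myU : Filter ℕ) (𝓝 0) := by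
    have h5 := hy₂ g
    rw [hy₂y] at h5
    have hconst : Tendsto (fun _ : ℕ => g y) (myU : Filter ℕ) (𝓝 (g y)) := tendsto_const_nhds
    have h6 := h5.dist hconst
    simpa using h6
  have h7 : (0:ℝ) ≥ ε := by
    refine ge_of_tendsto h4 ?_
    exact Filter.Eventually.of_forall fun n => hψ2 n
  linarith

end WC

section AuxDP
set_option maxHeartbeats 1000000
set_option synthInstance.maxHeartbeats 400000
set_option linter.unusedSectionVars false
open scoped ENNReal

universe u1 u2 u3

lemma dp_cauchy {X : Type u1} [NormedAddCommGroup X] [NormedSpace ℝ X]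
    {Y : Type u2} [NormedAddCommGroup Y] [NormedSpace ℝ Y]
    [TopologicalSpace.SeparableSpace Y]
    (hX' : DunfordPettisProp.{u1, u3} X) (T : X →L[ℝ] Y) (hWC : WeaklyCompactOp T) :
    ∀ (x : ℕ → X) (x₀ : X), WeakConvTo x x₀ → CauchySeq (fun n => T (x n)) := by
  haveI : Fact ((1 : ℝ≥0∞) ≤ ∞) := ⟨le_top⟩
  obtain ⟨q, hq⟩ := exists_linfty_embedding Y
  set W : Type := ↥(lp (fun _ : ℕ => ℝ) ∞) with hWdef
  set eW : W ≃ₗᵢ[ℝ] ULift.{u3} W := (LinearIsometryEquiv.ulift ℝ W).symm with heWdef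
  set qA : Y →L[ℝ] ULift.{u3} W :=
    (eW.toLinearIsometry.toContinuousLinearMap).comp q with hqAdef
  have hqA : ∀ w : Y, ‖qA w‖ = ‖w‖ := by
    intro w
    calc ‖qA w‖ = ‖eW.toLinearIsometry (q w)‖ := rfl
      _ = ‖q w‖ := eW.toLinearIsometry.norm_map _
      _ = ‖w‖ := hq w
  set A : X →L[ℝ] ULift.{u3} W := qA.comp T with hAdef
  have hWCA : WeaklyCompactOp A := by
    rintro x hbdd
    obtain ⟨φ, hφ, y, hy⟩ := hWC x hbdd
    refine ⟨φ, hφ, qA y, ?_⟩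
    intro h
    exact hy (h.comp qA)
  have hCCA : CompletelyContinuousOp A := hX' (ULift.{u3} W) A hWCA
  intro x x₀ hweak
  obtain ⟨zl, hzl⟩ := hCCA x x₀ hweak
  have hAx : CauchySeq (fun n => A (x n)) := hzl.cauchySeq
  rw [Metric.cauchySeq_iff] at hAx ⊢
  intro ε hε
  obtain ⟨N, hN⟩ := hAx ε hε
  refine ⟨N, fun m hm n hn => ?_⟩
  have hdist : dist (T (x m)) (T (x n)) = dist (A (x m)) (A (x n)) := by
    rw [dist_eq_norm, dist_eq_norm]
    have h1 : A (x m) - A (x n) = qA (T (x m) - T (x n)) := by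
      rw [map_sub]
      rfl
    rw [h1, hqA]
  rw [hdist]
  exact hN m hm n hn

end AuxDP

section Final
set_option maxHeartbeats 1000000
set_option synthInstance.maxHeartbeats 400000
set_option linter.unusedSectionVars false

open Metric

variable {X : Type*} [NormedAddCommGroup X] [NormedSpace ℝ X] [CompleteSpace X]
variable {Y : Type*} [NormedAddCommGroup Y] [NormedSpace ℝ Y] [CompleteSpace Y]

lemma exists_dual_factor (T : X →L[ℝ] Y) (X₀ : Subspace ℝ X) {c : ℝ} (hc : 0 < c)
    (hb : ∀ w ∈ X₀, c * ‖w‖ ≤ ‖T w‖) (f : X →L[ℝ] ℝ) :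
    ∃ g : Y →L[ℝ] ℝ, ∀ w ∈ X₀, g (T w) = f w := by
  set S : ↥X₀ →ₗ[ℝ] Y := T.toLinearMap.domRestrict X₀ with hSdef
  have hSapp : ∀ w : ↥X₀, S w = T (w : X) := fun w => rfl
  have hinj : Function.Injective S := by
    intro p q hpq
    have h1 : T ((p : X) - (q : X)) = 0 := by
      rw [map_sub, ← hSapp p, ← hSapp q, hpq, sub_self]
    have h2 : c * ‖(p : X) - (q : X)‖ ≤ 0 := by
      have := hb ((p : X) - (q : X)) (X₀.sub_mem p.2 q.2)
      rwa [h1, norm_zero] at this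
    have h3 : ‖(p : X) - (q : X)‖ ≤ 0 := by
      by_contra h4
      push_neg at h4
      nlinarith
    have h5 : (p : X) = (q : X) := by
      rw [← sub_eq_zero]
      exact norm_le_zero_iff.1 h3
    exact Subtype.ext h5
  set e := LinearEquiv.ofInjective S hinj with hedef
  set ℓ₀ : ↥(LinearMap.range S) →ₗ[ℝ] ℝ :=
    (f.toLinearMap.domRestrict X₀).comp e.symm.toLinearMap with hℓ₀def
  have hbd : ∀ v : ↥(LinearMap.range S), ‖ℓ₀ v‖ ≤ (‖f‖ / c) * ‖v‖ := by
    intro v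
    set w : ↥X₀ := e.symm v with hwdef
    have hv : S w = (v : Y) := by
      have := LinearEquiv.ofInjective_symm_apply (f := S) (h := hinj) v
      rw [← hwdef] at this
      exact this
    have hval : ℓ₀ v = f (w : X) := rfl
    have hnv : ‖(v : Y)‖ = ‖T (w : X)‖ := by rw [← hv, hSapp]
    have h1 : c * ‖(w : X)‖ ≤ ‖T (w : X)‖ := hb _ w.2
    have h2 : ‖(w : X)‖ ≤ ‖(v : Y)‖ / c := by
      rw [le_div_iff₀ hc, mul_comm]
      rw [hnv]
      exact h1
    calc ‖ℓ₀ v‖ = ‖f (w : X)‖ := by rw [hval]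
      _ ≤ ‖f‖ * ‖(w : X)‖ := f.le_opNorm _
      _ ≤ ‖f‖ * (‖(v : Y)‖ / c) := mul_le_mul_of_nonneg_left h2 (norm_nonneg f)
      _ = (‖f‖ / c) * ‖(v : Y)‖ := by ring
      _ = (‖f‖ / c) * ‖v‖ := rfl
  set ℓ : ↥(LinearMap.range S) →L[ℝ] ℝ := ℓ₀.mkContinuous (‖f‖ / c) hbd with hℓdef
  obtain ⟨g, hg, -⟩ := exists_extension_norm_eq (LinearMap.range S) ℓ
  refine ⟨g, fun w hw => ?_⟩
  have hmem : T w ∈ LinearMap.range S := ⟨⟨w, hw⟩, rfl⟩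
  have h6 : g (T w) = ℓ ⟨T w, hmem⟩ := hg ⟨T w, hmem⟩
  have h7 : ℓ ⟨T w, hmem⟩ = ℓ₀ ⟨T w, hmem⟩ := rfl
  have h8 : (⟨T w, hmem⟩ : ↥(LinearMap.range S)) = e ⟨w, hw⟩ := by
    apply Subtype.ext
    rw [LinearEquiv.ofInjective_apply]
    rfl
  have h9 : ℓ₀ (e ⟨w, hw⟩) = f w := by
    have h10 : e.symm (e ⟨w, hw⟩) = ⟨w, hw⟩ := e.symm_apply_apply _
    simp only [hℓ₀def, LinearMap.comp_apply, LinearEquiv.coe_toLinearMap, h10]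
    rfl
  rw [h6, h7, h8, h9]

end Final


variable {X : Type*} [NormedAddCommGroup X] [NormedSpace ℝ X] [CompleteSpace X]
variable {Y : Type*} [NormedAddCommGroup Y] [NormedSpace ℝ Y] [CompleteSpace Y]

set_option maxHeartbeats 1000000 in
set_option synthInstance.maxHeartbeats 400000 in
/-- If `X` is a Grothendieck space with the Dunford–Pettis property and `Y` is separable, then
every bounded linear operator `T : X → Y` is strictly singular. -/
theorem stmt13 [TopologicalSpace.SeparableSpace Y] (hX : GrothendieckSpace X)
    (hX' : DunfordPettisProp X) (T : X →L[ℝ] Y) : StrictlySingular T := by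
  intro X₀ hX₀closed hX₀fd hiso
  obtain ⟨c, hc, hb⟩ := hiso
  apply hX₀fd
  have hWC : WeaklyCompactOp T := grothendieck_weaklyCompact hX T
  have hTcc : ∀ (x : ℕ → X) (x₀ : X), WeakConvTo x x₀ → CauchySeq (fun n => T (x n)) :=
    dp_cauchy hX' T hWC
  -- the image T '' X₀ is closed
  have himg_seqclosed : IsSeqClosed (T '' (X₀ : Set X)) := by
    intro p q hp hq
    choose w hw1 hw2 using hp
    have hcauchyp : CauchySeq p := hq.cauchySeq
    have hcauchyw : CauchySeq w := by
      rw [Metric.cauchySeq_iff]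
      intro ε hε
      rw [Metric.cauchySeq_iff] at hcauchyp
      obtain ⟨N, hN⟩ := hcauchyp (c * ε) (by positivity)
      refine ⟨N, fun m hm n hn => ?_⟩
      have h1 : c * ‖w m - w n‖ ≤ ‖T (w m - w n)‖ := hb _ (X₀.sub_mem (hw1 m) (hw1 n))
      rw [map_sub, hw2 m, hw2 n] at h1
      have h2 : dist (p m) (p n) < c * ε := hN m hm n hn
      rw [dist_eq_norm] at h2 ⊢
      nlinarith [norm_nonneg (w m - w n)]
    obtain ⟨wl, hwl⟩ := cauchySeq_tendsto_of_complete hcauchyw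
    have hwlmem : wl ∈ X₀ := hX₀closed.mem_of_tendsto hwl (Filter.Eventually.of_forall hw1)
    refine ⟨wl, hwlmem, ?_⟩
    have h3 : Filter.Tendsto (fun n => T (w n)) atTop (𝓝 (T wl)) :=
      (T.continuous.tendsto wl).comp hwl
    have h4 : (fun n => T (w n)) = p := funext hw2
    rw [h4] at h3
    exact tendsto_nhds_unique h3 hq
  have himg_closed : IsClosed (T '' (X₀ : Set X)) := himg_seqclosed.isClosed
  have himg_convex : Convex ℝ (T '' (X₀ : Set X)) := by
    have : T '' (X₀ : Set X) = (Submodule.map T.toLinearMap X₀ : Set Y) := by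
      simp [Submodule.map_coe]
    rw [this]
    exact (Submodule.map T.toLinearMap X₀).convex
  -- sequential compactness of the closed unit ball of X₀
  have hseqcpt : IsSeqCompact (Metric.closedBall (0 : ↥X₀) 1) := by
    intro u hu
    set v : ℕ → X := fun n => (u n : X) with hvdef
    have hv1 : ∀ n, ‖v n‖ ≤ 1 := by
      intro n
      have := hu n
      rw [Metric.mem_closedBall, dist_zero_right] at this
      exact this
    obtain ⟨φ, hφ, y, hy⟩ := hWC v ⟨1, hv1⟩
    -- y belongs to T '' X₀
    have hymem : y ∈ T '' (X₀ : Set X) := by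
      by_contra hynot
      obtain ⟨f, s, hfs, hsy⟩ := geometric_hahn_banach_closed_point himg_convex himg_closed hynot
      have h1 : Filter.Tendsto (fun n => f (T (v (φ n)))) atTop (𝓝 (f y)) := hy f
      have h2 : ∀ n, f (T (v (φ n))) ≤ s := fun n =>
        le_of_lt (hfs _ ⟨v (φ n), (u (φ n)).2, rfl⟩)
      have h3 : f y ≤ s := le_of_tendsto h1 (Filter.Eventually.of_forall h2)
      linarith
    obtain ⟨x₀, hx₀mem, hx₀⟩ := hymem
    -- weak convergence of v ∘ φ to x₀
    have hweak : WeakConvTo (v ∘ φ) x₀ := by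
      intro f
      obtain ⟨g, hg⟩ := exists_dual_factor T X₀ hc hb f
      have h1 : ∀ n, f ((v ∘ φ) n) = g (T (v (φ n))) := fun n => (hg _ (u (φ n)).2).symm
      have h2 : Filter.Tendsto (fun n => g (T (v (φ n)))) atTop (𝓝 (g y)) := hy g
      have h3 : g y = f x₀ := by rw [← hx₀]; exact hg _ hx₀mem
      rw [show (fun n => f ((v ∘ φ) n)) = fun n => g (T (v (φ n))) from funext h1]
      rw [← h3]
      exact h2
    -- complete continuity (through the universe transfer): T (v ∘ φ) is norm Cauchy
    have hTc : CauchySeq (fun n => T ((v ∘ φ) n)) := hTcc (v ∘ φ) x₀ hweak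
    -- hence v ∘ φ is Cauchy
    have hcauchy : CauchySeq (v ∘ φ) := by
      rw [Metric.cauchySeq_iff]
      intro ε hε
      rw [Metric.cauchySeq_iff] at hTc
      obtain ⟨N, hN⟩ := hTc (c * ε) (by positivity)
      refine ⟨N, fun m hm n hn => ?_⟩
      have h1 : c * ‖v (φ m) - v (φ n)‖ ≤ ‖T (v (φ m) - v (φ n))‖ :=
        hb _ (X₀.sub_mem (u (φ m)).2 (u (φ n)).2)
      rw [map_sub] at h1
      have h2 : dist (T (v (φ m))) (T (v (φ n))) < c * ε := hN m hm n hn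
      rw [dist_eq_norm] at h2
      rw [dist_eq_norm]
      simp only [Function.comp_apply]
      nlinarith [norm_nonneg (v (φ m) - v (φ n))]
    obtain ⟨wl, hwl⟩ := cauchySeq_tendsto_of_complete hcauchy
    have hwlmem : wl ∈ X₀ :=
      hX₀closed.mem_of_tendsto hwl (Filter.Eventually.of_forall fun n => (u (φ n)).2)
    have hwlnorm : ‖wl‖ ≤ 1 :=
      le_of_tendsto hwl.norm (Filter.Eventually.of_forall fun n => hv1 (φ n))
    refine ⟨⟨wl, hwlmem⟩, ?_, φ, hφ, ?_⟩
    · rw [Metric.mem_closedBall, dist_zero_right]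
      exact hwlnorm
    · rw [Metric.tendsto_atTop]
      intro ε hε
      rw [Metric.tendsto_atTop] at hwl
      obtain ⟨N, hN⟩ := hwl ε hε
      refine ⟨N, fun n hn => ?_⟩
      have h1 : dist ((u ∘ φ) n) (⟨wl, hwlmem⟩ : ↥X₀) = dist (v (φ n)) wl := by
        rw [dist_eq_norm, dist_eq_norm]
        rfl
      rw [h1]
      exact hN n hn
  have hcpt : IsCompact (Metric.closedBall (0 : ↥X₀) 1) := hseqcpt.isCompact
  exact FiniteDimensional.of_isCompact_closedBall₀ ℝ one_pos hcpt
end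

section
/- Let X and Y be Banach spaces over ℝ. If X is almost reflexive and very-irreflexive, and Y is weakly sequentially complete, then every bounded linear operator T : X → Y is strictly singular. -/
open Filter Topology

variable {X : Type*} [NormedAddCommGroup X] [NormedSpace ℝ X] [CompleteSpace X]
variable {Y : Type*} [NormedAddCommGroup Y] [NormedSpace ℝ Y] [CompleteSpace Y]

lemma aux_vanish {E : Type*} [NormedAddCommGroup E] [NormedSpace ℝ E]
    (f : E →L[ℝ] ℝ) (p : Submodule ℝ E) (u : ℝ) (h : ∀ b ∈ (p : Set E), u < f b) :
    ∀ b ∈ p, f b = 0 := by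
  intro b hb
  by_contra hne
  -- scale b so that f (t • b) is arbitrarily small
  have h0 : u < f 0 := h 0 p.zero_mem
  have key : ∀ t : ℝ, u < t * f b := by
    intro t
    have := h (t • b) (p.smul_mem t hb)
    simpa using this
  have := key ((u - 1) / f b)
  rw [div_mul_cancel₀ _ hne] at this
  linarith

/-- If `X` is almost reflexive and very-irreflexive and `Y` is weakly sequentially complete,
then every bounded linear operator `T : X → Y` is strictly singular. -/
theorem stmt15 (hX : AlmostReflexive X) (hX' : VeryIrreflexive X) (hY : WeaklySeqComplete Y)
    (T : X →L[ℝ] Y) : StrictlySingular T := by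
  intro X₀ hclosed hinfdim
  rintro ⟨c, hc, hbound⟩
  apply hX' X₀ hclosed hinfdim
  haveI : CompleteSpace X₀ := hclosed.completeSpace_coe
  -- the restricted operator
  set S : X₀ →L[ℝ] Y := T.comp (Submodule.subtypeL X₀) with hSdef
  have hS : ∀ z : X₀, c * ‖z‖ ≤ ‖S z‖ := fun z => by
    simpa [hSdef] using hbound (z : X) z.2
  have hanti : AntilipschitzWith (⟨c, hc.le⟩ : NNReal)⁻¹ S := by
    apply AddMonoidHomClass.antilipschitz_of_bound
    intro z
    show ‖z‖ ≤ c⁻¹ * ‖S z‖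
    rw [le_inv_mul_iff₀ (by exact_mod_cast hc)]
    exact hS z
  have hinj : Function.Injective S := hanti.injective
  have hcloR : IsClosed (Set.range S) := hanti.isClosed_range S.uniformContinuous
  have hcloR' : IsClosed ((LinearMap.range (S : X₀ →ₗ[ℝ] Y) : Submodule ℝ Y) : Set Y) := by
    simpa [LinearMap.coe_range] using hcloR
  -- prove sequential reflexivity of X₀
  intro x ⟨C, hC⟩
  obtain ⟨φ, hφ, hwc⟩ := hX (fun n => (x n : X)) ⟨C, fun n => by simpa using hC n⟩
  have hwcY : WeaklyCauchySeq (fun n => S (x (φ n))) := by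
    intro f
    exact hwc (f.comp T)
  obtain ⟨y, hy⟩ := hY _ hwcY
  -- y belongs to the closed range of S
  have hymem : y ∈ LinearMap.range (S : X₀ →ₗ[ℝ] Y) := by
    by_contra hnot
    obtain ⟨f, u, hfy, hfb⟩ := geometric_hahn_banach_point_closed
      (t := ((LinearMap.range (S : X₀ →ₗ[ℝ] Y) : Submodule ℝ Y) : Set Y))
      ((LinearMap.range (S : X₀ →ₗ[ℝ] Y) : Submodule ℝ Y).convex) hcloR' hnot
    have hvanish := aux_vanish f (LinearMap.range (S : X₀ →ₗ[ℝ] Y)) u hfb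
    have h0 : u < f 0 := hfb 0 (Submodule.zero_mem _)
    have hlim := hy f
    have heq : (fun n => f (S (x (φ n)))) = fun _ => (0 : ℝ) := by
      funext n
      exact hvanish _ (LinearMap.mem_range_self _ _)
    rw [heq] at hlim
    have : f y = 0 := tendsto_nhds_unique hlim tendsto_const_nhds ▸ rfl
    rw [tendsto_const_nhds_iff] at hlim
    rw [← hlim] at hfy
    simp at h0
    linarith
  obtain ⟨x₀, hx₀⟩ := hymem
  refine ⟨φ, hφ, x₀, ?_⟩
  intro g
  -- build a functional on Y that pulls back to g via S
  let e : X₀ ≃L[ℝ] LinearMap.range (S : X₀ →ₗ[ℝ] Y) := S.equivRange hinj hcloR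
  have he : ∀ z : X₀, ((e z : Y)) = S z := fun z => rfl
  let h₀ : (LinearMap.range (S : X₀ →ₗ[ℝ] Y) : Submodule ℝ Y) →L[ℝ] ℝ :=
    g.comp (e.symm : (LinearMap.range (S : X₀ →ₗ[ℝ] Y) : Submodule ℝ Y) →L[ℝ] X₀)
  obtain ⟨f, hf, _⟩ := exists_extension_norm_eq (LinearMap.range (S : X₀ →ₗ[ℝ] Y)) h₀
  have key : ∀ z : X₀, f (S z) = g z := by
    intro z
    have : f (S z) = h₀ (e z) := by
      have := hf (e z)
      rw [he z] at this
      exact this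
    rw [this]
    simp only [h₀, ContinuousLinearMap.comp_apply]
    rw [show ((e.symm : (LinearMap.range (S : X₀ →ₗ[ℝ] Y) : Submodule ℝ Y) →L[ℝ] X₀) (e z)) = z from
      e.symm_apply_apply z]
  have hlim := hy f
  have h1 : (fun n => f (S (x (φ n)))) = fun n => g ((x ∘ φ) n) := by
    funext n; exact key (x (φ n))
  rw [h1, show f y = g x₀ by rw [← hx₀]; exact key x₀] at hlim
  exact hlim
end

section
/- Let X and Y be Banach spaces over ℝ. If X has both the Dunford–Pettis property and the Dieudonné property, and Y is weakly sequentially complete, then every bounded linear operator T : X → Y is strictly singular. -/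
open Filter Topology

section Aux

open scoped ENNReal NNReal

variable {E : Type*} [NormedAddCommGroup E] [NormedSpace ℝ E]
variable {F : Type*} [NormedAddCommGroup F] [NormedSpace ℝ F]

/-- Pushforward of weak convergence through a continuous linear map. -/
theorem WeakConvTo.clm_map {x : ℕ → E} {x₀ : E} (h : WeakConvTo x x₀) (A : E →L[ℝ] F) :
    WeakConvTo (fun n => A (x n)) (A x₀) := fun f => h (f.comp A)

/-- Pullback of weak convergence through an operator bounded below. -/
theorem weakConvTo_pullback [CompleteSpace E] (j : E →L[ℝ] F) {c : ℝ} (hc : 0 < c)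
    (hj : ∀ u : E, c * ‖u‖ ≤ ‖j u‖) (w : ℕ → E) (z : F)
    (hz : WeakConvTo (fun n => j (w n)) z) :
    ∃ w₀ : E, j w₀ = z ∧ WeakConvTo w w₀ := by
  have hj' : ∀ u : E, ‖u‖ ≤ c⁻¹ * ‖j u‖ := by
    intro u
    rw [inv_mul_eq_div, le_div_iff₀ hc, mul_comm]
    exact hj u
  have hanti : AntilipschitzWith (⟨c⁻¹, by positivity⟩ : NNReal) j :=
    j.antilipschitz_of_bound fun u => hj' u
  have hrc : IsClosed (Set.range j) := hanti.isClosed_range j.uniformContinuous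
  have hinj : Function.Injective j := hanti.injective
  have hrange_eq : (LinearMap.range (j : E →ₗ[ℝ] F) : Set F) = Set.range j := by
    ext v; simp [LinearMap.mem_range]
  have hzr : z ∈ Set.range j := by
    by_contra hmem
    obtain ⟨f, u, hfz, hfb⟩ := geometric_hahn_banach_point_closed
      (by rw [← hrange_eq]; exact (LinearMap.range (j : E →ₗ[ℝ] F)).convex) hrc hmem
    have hzero : ∀ v : E, f (j v) = 0 := by
      intro v
      by_contra hne
      have h1 := hfb _ ⟨((u - 1) / f (j v)) • v, rfl⟩
      rw [map_smul, map_smul, smul_eq_mul, div_mul_cancel₀ _ hne] at h1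
      linarith
    have h0 : u < 0 := by
      have := hfb _ ⟨0, rfl⟩
      simpa using this
    have hlim := hz f
    simp only [hzero] at hlim
    have hfz0 : f z = 0 := tendsto_nhds_unique hlim tendsto_const_nhds
    rw [hfz0] at hfz
    linarith
  obtain ⟨w₀, hw₀⟩ := hzr
  refine ⟨w₀, hw₀, ?_⟩
  intro f
  set R := LinearMap.range (j : E →ₗ[ℝ] F) with hR
  let eqv : E ≃ₗ[ℝ] R := LinearEquiv.ofInjective (j : E →ₗ[ℝ] F) hinj
  have heqv : ∀ v : E, eqv v = (⟨j v, LinearMap.mem_range_self _ v⟩ : R) := fun v => rfl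
  have hsymm : ∀ v : E, eqv.symm (⟨j v, LinearMap.mem_range_self _ v⟩ : R) = v := by
    intro v
    rw [← heqv, eqv.symm_apply_apply]
  let g0 : R →ₗ[ℝ] ℝ := f.toLinearMap.comp eqv.symm.toLinearMap
  have hg0 : ∀ s : R, ‖g0 s‖ ≤ (‖f‖ * c⁻¹) * ‖s‖ := by
    intro s
    have hs : j (eqv.symm s) = (s : F) := by
      conv_rhs => rw [← eqv.apply_symm_apply s]
      rfl
    have : ‖g0 s‖ = ‖f (eqv.symm s)‖ := rfl
    rw [this]
    calc ‖f (eqv.symm s)‖ ≤ ‖f‖ * ‖eqv.symm s‖ := f.le_opNorm _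
      _ ≤ ‖f‖ * (c⁻¹ * ‖j (eqv.symm s)‖) :=
          mul_le_mul_of_nonneg_left (hj' _) (norm_nonneg f)
      _ = (‖f‖ * c⁻¹) * ‖(s : F)‖ := by rw [hs, mul_assoc]
      _ = (‖f‖ * c⁻¹) * ‖s‖ := rfl
  let g : R →L[ℝ] ℝ := LinearMap.mkContinuous g0 (‖f‖ * c⁻¹) hg0
  obtain ⟨G, hG, -⟩ := exists_extension_norm_eq R g
  have hGj : ∀ v : E, G (j v) = f v := by
    intro v
    have h1 : G (j v) = g (⟨j v, LinearMap.mem_range_self _ v⟩ : R) :=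
      hG (⟨j v, LinearMap.mem_range_self _ v⟩ : R)
    rw [h1]
    show f (eqv.symm (⟨j v, LinearMap.mem_range_self _ v⟩ : R)) = f v
    rw [hsymm]
  have hlim := hz G
  simp only [hGj] at hlim
  have hGz : G z = f w₀ := by rw [← hw₀, hGj]
  rw [hGz] at hlim
  exact hlim

/-- A norming operator into `ℓ∞` for a separable subset. -/
theorem exists_norming (s : Set F) (hs : TopologicalSpace.IsSeparable s) :
    ∃ ι : F →L[ℝ] lp (fun _ : ℕ => ℝ) ∞,
      (∀ y : F, ‖ι y‖ ≤ ‖y‖) ∧ ∀ y ∈ s, ‖y‖ ≤ ‖ι y‖ := by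
  obtain ⟨c, hc, hsc⟩ := hs
  obtain ⟨d, hd⟩ := Set.Countable.exists_eq_range (hc.insert (0 : F))
    (Set.insert_nonempty _ _)
  choose f hf1 hf2 using fun k => exists_dual_vector'' ℝ (d k)
  have hble : ∀ (y : F) (k : ℕ), ‖f k y‖ ≤ ‖y‖ := by
    intro y k
    calc ‖f k y‖ ≤ ‖f k‖ * ‖y‖ := (f k).le_opNorm y
      _ ≤ 1 * ‖y‖ := mul_le_mul_of_nonneg_right (hf1 k) (norm_nonneg y)
      _ = ‖y‖ := one_mul _
  have hmem : ∀ y : F, Memℓp (fun k => f k y) ∞ := by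
    intro y
    apply memℓp_infty
    refine ⟨‖y‖, ?_⟩
    rintro r ⟨k, rfl⟩
    exact hble y k
  let L : F →ₗ[ℝ] lp (fun _ : ℕ => ℝ) ∞ :=
    { toFun := fun y => ⟨fun k => f k y, hmem y⟩
      map_add' := fun a b => by
        apply Subtype.ext
        funext k
        exact map_add (f k) a b
      map_smul' := fun r a => by
        apply Subtype.ext
        funext k
        exact map_smul (f k) r a }
  have hL : ∀ y, ‖L y‖ ≤ 1 * ‖y‖ := by
    intro y
    rw [one_mul]
    exact lp.norm_le_of_forall_le (norm_nonneg y) fun k => hble y k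
  refine ⟨L.mkContinuous 1 hL, fun y => by have := hL y; rwa [one_mul] at this, ?_⟩
  intro y hy
  refine le_of_forall_pos_le_add ?_
  intro ε hε
  have hyc : y ∈ closure (insert (0 : F) c) :=
    closure_mono (Set.subset_insert _ _) (hsc hy)
  rw [hd] at hyc
  obtain ⟨w, hwmem, hwd⟩ := Metric.mem_closure_iff.1 hyc (ε / 2) (by positivity)
  obtain ⟨k, rfl⟩ := hwmem
  have hdist : ‖y - d k‖ < ε / 2 := by rwa [← dist_eq_norm]
  have h1 : ‖y‖ ≤ ‖d k‖ + ε / 2 := by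
    have := norm_sub_norm_le y (d k)
    have h := this.trans hdist.le
    linarith
  have h3 : f k (d k) - f k y ≤ ε / 2 := by
    have : f k (d k) - f k y = f k (d k - y) := by rw [map_sub]
    rw [this]
    calc f k (d k - y) ≤ ‖f k (d k - y)‖ := le_abs_self _
      _ ≤ ‖d k - y‖ := hble _ k
      _ = ‖y - d k‖ := norm_sub_rev _ _
      _ ≤ ε / 2 := hdist.le
  have h4 : f k y ≤ ‖f k y‖ := le_abs_self _
  have h5 : ‖f k y‖ ≤ ‖(L.mkContinuous 1 hL) y‖ :=
    lp.norm_apply_le_norm ENNReal.top_ne_zero ((L.mkContinuous 1 hL) y) k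
  have h2 : ‖d k‖ = f k (d k) := (hf2 k).symm
  linarith

end Aux

variable {X : Type*} [NormedAddCommGroup X] [NormedSpace ℝ X] [CompleteSpace X]
variable {Y : Type*} [NormedAddCommGroup Y] [NormedSpace ℝ Y] [CompleteSpace Y]

open scoped ENNReal NNReal
set_option maxHeartbeats 2000000

/-- If `X` has the Dunford–Pettis and Dieudonné properties and `Y` is weakly sequentially
complete, then every bounded linear operator `T : X → Y` is strictly singular. -/
theorem stmt17 (hX : DunfordPettisProp X) (hX' : DieudonneProp X) (hY : WeaklySeqComplete Y)
    (T : X →L[ℝ] Y) : StrictlySingular T := by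
  classical
  rintro X₀ hclosed hinf ⟨c, hc, hbound⟩
  apply hinf
  haveI : CompleteSpace X₀ := hclosed.completeSpace_coe
  set e : X₀ →L[ℝ] Y := T.comp X₀.subtypeL with he
  have hbe : ∀ u : X₀, c * ‖u‖ ≤ ‖e u‖ := fun u => hbound u u.2
  -- Step 1: every bounded sequence has a subsequence whose image converges weakly in Y.
  have step1 : ∀ x : ℕ → X, (∃ C : ℝ, ∀ n, ‖x n‖ ≤ C) →
      ∃ φ : ℕ → ℕ, StrictMono φ ∧ ∃ y : Y, WeakConvTo (fun n => T (x (φ n))) y := by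
    intro x hxb
    set g : ℕ → Y := fun n => T (x n) with hg
    set Y₀ : Submodule ℝ Y := (Submodule.span ℝ (Set.range g)).topologicalClosure with hY₀
    have hY₀closed : IsClosed (Y₀ : Set Y) := Submodule.isClosed_topologicalClosure _
    haveI : CompleteSpace Y₀ := hY₀closed.completeSpace_coe
    have hY₀sep : TopologicalSpace.IsSeparable (Y₀ : Set Y) := by
      rw [hY₀, Submodule.topologicalClosure_coe]
      exact (Set.countable_range g).isSeparable.span.closure
    obtain ⟨ι, hι1, hι2⟩ := exists_norming (Y₀ : Set Y) hY₀sep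
    let κ := (LinearIsometryEquiv.ulift ℝ (lp (fun _ : ℕ => ℝ) ∞)).symm
    let ι' : Y →L[ℝ] ULift (lp (fun _ : ℕ => ℝ) ∞) :=
      κ.toLinearIsometry.toContinuousLinearMap.comp ι
    have hι'norm : ∀ v : Y, ‖ι' v‖ = ‖ι v‖ := fun v =>
      κ.toLinearIsometry.norm_map (ι v)
    set T' : X →L[ℝ] ULift (lp (fun _ : ℕ => ℝ) ∞) := ι'.comp T with hT'
    have hwc' : WeaklyCompactOp T' := by
      apply hX' _ T'
      intro w hw
      obtain ⟨y, hy⟩ := hY (fun n => T (w n)) (fun f => hw (f.comp T))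
      exact ⟨ι' y, hy.clm_map ι'⟩
    obtain ⟨φ, hφ, z, hz⟩ := hwc' x hxb
    -- pull back through the norming embedding restricted to Y₀
    set j : Y₀ →L[ℝ] ULift (lp (fun _ : ℕ => ℝ) ∞) := ι'.comp Y₀.subtypeL with hj
    have hjb : ∀ u : Y₀, (1 : ℝ) * ‖u‖ ≤ ‖j u‖ := by
      intro u
      rw [one_mul]
      have : ‖j u‖ = ‖ι (u : Y)‖ := hι'norm (u : Y)
      rw [this]
      exact hι2 (u : Y) u.2
    have hgmem : ∀ n, g (φ n) ∈ Y₀ :=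
      fun n => Submodule.le_topologicalClosure _ (Submodule.subset_span ⟨φ n, rfl⟩)
    set w : ℕ → Y₀ := fun n => ⟨g (φ n), hgmem n⟩ with hw
    have hzw : WeakConvTo (fun n => j (w n)) z := hz
    obtain ⟨y₀, -, hy₀⟩ := weakConvTo_pullback j one_pos hjb w z hzw
    exact ⟨φ, hφ, (y₀ : Y), hy₀.clm_map Y₀.subtypeL⟩
  -- Step 2: T maps weakly convergent sequences to norm convergent ones.
  have step2 : ∀ (x : ℕ → X) (x₀ : X), WeakConvTo x x₀ →
      ∃ y : Y, Tendsto (fun n => T (x n)) atTop (𝓝 y) := by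
    intro x x₀ hx
    set g : ℕ → Y := fun n => T (x n) with hg
    set Y₀ : Submodule ℝ Y := (Submodule.span ℝ (Set.range g)).topologicalClosure with hY₀
    have hY₀sep : TopologicalSpace.IsSeparable (Y₀ : Set Y) := by
      rw [hY₀, Submodule.topologicalClosure_coe]
      exact (Set.countable_range g).isSeparable.span.closure
    obtain ⟨ι, hι1, hι2⟩ := exists_norming (Y₀ : Set Y) hY₀sep
    let κ := (LinearIsometryEquiv.ulift ℝ (lp (fun _ : ℕ => ℝ) ∞)).symm
    let ι' : Y →L[ℝ] ULift (lp (fun _ : ℕ => ℝ) ∞) :=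
      κ.toLinearIsometry.toContinuousLinearMap.comp ι
    have hι'norm : ∀ v : Y, ‖ι' v‖ = ‖ι v‖ := fun v =>
      κ.toLinearIsometry.norm_map (ι v)
    set T'' : X →L[ℝ] ULift (lp (fun _ : ℕ => ℝ) ∞) := ι'.comp T with hT''
    have hwc'' : WeaklyCompactOp T'' := by
      intro v hv
      obtain ⟨φ, hφ, y, hy⟩ := step1 v hv
      exact ⟨φ, hφ, ι' y, hy.clm_map ι'⟩
    obtain ⟨z, hzt⟩ := hX _ T'' hwc'' x x₀ hx
    have hgmem : ∀ n, g n ∈ Y₀ :=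
      fun n => Submodule.le_topologicalClosure _ (Submodule.subset_span ⟨n, rfl⟩)
    have hcauchy : CauchySeq (fun n => T (x n)) := by
      have hC : CauchySeq (fun n => T'' (x n)) := hzt.cauchySeq
      rw [Metric.cauchySeq_iff] at hC ⊢
      intro ε hε
      obtain ⟨N, hN⟩ := hC ε hε
      refine ⟨N, fun m hm n hn => ?_⟩
      have hsub : T (x m) - T (x n) ∈ Y₀ := Y₀.sub_mem (hgmem m) (hgmem n)
      have hle : dist (T (x m)) (T (x n)) ≤ dist (T'' (x m)) (T'' (x n)) := by
        rw [dist_eq_norm, dist_eq_norm]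
        calc ‖T (x m) - T (x n)‖ ≤ ‖ι (T (x m) - T (x n))‖ := hι2 _ hsub
          _ = ‖ι' (T (x m) - T (x n))‖ := (hι'norm _).symm
          _ = ‖T'' (x m) - T'' (x n)‖ := by rw [map_sub]; rfl
      exact lt_of_le_of_lt hle (hN m hm n hn)
    exact cauchySeq_tendsto_of_complete hcauchy
  -- main argument: unit ball of X₀ is sequentially compact
  have hbe' : ∀ u : X₀, ‖u‖ ≤ c⁻¹ * ‖e u‖ := by
    intro u
    rw [inv_mul_eq_div, le_div_iff₀ hc, mul_comm]
    exact hbe u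
  have hanti : AntilipschitzWith (⟨c⁻¹, by positivity⟩ : NNReal) e :=
    e.antilipschitz_of_bound fun u => hbe' u
  have hrange_closed : IsClosed (Set.range e) := hanti.isClosed_range e.uniformContinuous
  have key : ∀ x : ℕ → X₀, (∃ C : ℝ, ∀ n, ‖x n‖ ≤ C) →
      ∃ φ : ℕ → ℕ, StrictMono φ ∧ ∃ a : X₀, Tendsto (x ∘ φ) atTop (𝓝 a) := by
    rintro x ⟨C, hC⟩
    obtain ⟨φ, hφ, y, hy⟩ := step1 (fun n => (x n : X)) ⟨C, fun n => hC n⟩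
    have hy' : WeakConvTo (fun n => e (x (φ n))) y := hy
    obtain ⟨x₀, -, hx₀⟩ := weakConvTo_pullback e hc hbe (fun n => x (φ n)) y hy'
    have hxw : WeakConvTo (fun n => ((x (φ n)) : X)) (x₀ : X) := hx₀.clm_map X₀.subtypeL
    obtain ⟨y', hy'2⟩ := step2 _ _ hxw
    have hy'r : y' ∈ Set.range e := hrange_closed.mem_of_tendsto hy'2
      (Eventually.of_forall fun n => ⟨x (φ n), rfl⟩)
    obtain ⟨a, ha⟩ := hy'r
    refine ⟨φ, hφ, a, ?_⟩
    rw [tendsto_iff_dist_tendsto_zero]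
    have hsq : ∀ n, dist ((x ∘ φ) n) a ≤ c⁻¹ * dist (e (x (φ n))) (e a) := by
      intro n
      rw [dist_eq_norm, dist_eq_norm, ← map_sub]
      exact hbe' _
    refine squeeze_zero (fun n => dist_nonneg) hsq ?_
    have hd : Tendsto (fun n => dist (e (x (φ n))) (e a)) atTop (𝓝 0) := by
      rw [ha]
      exact tendsto_iff_dist_tendsto_zero.1 hy'2
    have := hd.const_mul c⁻¹
    simpa using this
  have hcomp : IsCompact (Metric.closedBall (0 : X₀) 1) := by
    apply IsSeqCompact.isCompact
    intro x hx
    obtain ⟨φ, hφ, a, ha⟩ := key x ⟨1, fun n => by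
      simpa [Metric.mem_closedBall, dist_zero_right] using hx n⟩
    exact ⟨a, Metric.isClosed_closedBall.mem_of_tendsto ha
      (Eventually.of_forall fun n => hx (φ n)), φ, hφ, ha⟩
  exact FiniteDimensional.of_isCompact_closedBall₀ ℝ one_pos hcomp
end
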